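/- Let p > 3 be prime and write r = 2 + n(p-1)p^t with t ≥ 0 and n ≥ 0. Then for all i ≥ 3 with i ≤ t+3, Σ_{1<j≤r-1, j≡1 mod (p-1)} C(j,i)·C(r,j) ≡ 0 (mod p^{t+3-i}). -/

import Mathlib

lemma five_pow_ge (v : ℕ) (hv : 1 ≤ v) : v + 3 ≤ 5 ^ v := by
  induction v with
  | zero => omega
  | succ k ih =>
    rcases Nat.eq_or_lt_of_le hv with h | h
    · simp [← h]
    · have hk : 1 ≤ k := by omega
      have h5 : 5 ^ (k + 1) = 5 * 5 ^ k := by ring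
      nlinarith [ih hk]

lemma six_choose_three (m : ℕ) : 6 * m.choose 3 = (m - 2) * ((m - 1) * m) := by
  have h := Nat.descFactorial_eq_factorial_mul_choose m 3
  have h2 : m.descFactorial 3 = (m - 2) * ((m - 1) * m) := by
    simp [Nat.descFactorial_succ, Nat.descFactorial_zero]
  rw [h2] at h
  rw [show (6:ℕ) = Nat.factorial 3 by decide]
  exact h.symm

lemma extract_dvd {p v a b c : ℕ} (hp : p.Prime) (h : p ^ v ∣ a * (b * c))
    (hb : ¬ p ∣ b) (hc : ¬ p ∣ c) : p ^ v ∣ a := by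
  have cb : Nat.Coprime (p ^ v) b :=
    Nat.Coprime.pow_left _ ((Nat.Prime.coprime_iff_not_dvd hp).mpr hb)
  have cc : Nat.Coprime (p ^ v) c :=
    Nat.Coprime.pow_left _ ((Nat.Prime.coprime_iff_not_dvd hp).mpr hc)
  exact (Nat.Coprime.mul_right cb cc).dvd_of_dvd_mul_right h

lemma key_dvd (p n t i : ℕ) (hp : p.Prime) (hp3 : 3 < p) (hi3 : 3 ≤ i) (hit : i ≤ t + 3) :
    p ^ (t + 3 - i) ∣ (2 + n * (p - 1) * p ^ t).choose i := by
  set r := 2 + n * (p - 1) * p ^ t with hr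
  rcases lt_or_ge r i with hri | hir
  · rw [Nat.choose_eq_zero_of_lt hri]; exact dvd_zero _
  -- p^t ∣ r.choose 3
  have hcop6 : Nat.Coprime (p ^ t) 6 := by
    apply Nat.Coprime.pow_left
    have h6 : ¬ p ∣ 6 := by
      intro h
      have := Nat.le_of_dvd (by norm_num) h
      interval_cases p <;> revert hp h <;> decide
    exact (Nat.Prime.coprime_iff_not_dvd hp).mpr h6
  have hpt3 : p ^ t ∣ r.choose 3 := by
    apply Nat.Coprime.dvd_of_dvd_mul_left hcop6
    rw [six_choose_three]
    have h2 : r - 2 = n * (p - 1) * p ^ t := by omega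
    have hdr : p ^ t ∣ r - 2 := h2 ▸ dvd_mul_left (p ^ t) (n * (p - 1))
    exact Dvd.dvd.mul_right hdr _
  have hmul : r.choose i * i.choose 3 = r.choose 3 * (r - 3).choose (i - 3) :=
    Nat.choose_mul hi3
  have hdvd : p ^ t ∣ r.choose i * i.choose 3 := by
    rw [hmul]; exact hpt3.mul_right _
  -- bound the p-adic valuation of i.choose 3
  have hc3pos : 0 < i.choose 3 := Nat.choose_pos hi3
  set v := (i.choose 3).factorization p with hv
  have hpv : p ^ v ∣ i * ((i - 1) * (i - 2)) := by
    have h1 : p ^ v ∣ i.choose 3 := Nat.ordProj_dvd _ _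
    have h2 : i.choose 3 ∣ i * ((i - 1) * (i - 2)) :=
      ⟨6, by rw [show i.choose 3 * 6 = 6 * i.choose 3 by ring, six_choose_three]; ring⟩
    exact h1.trans h2
  have hvle : v ≤ i - 3 := by
    have hple : v = 0 ∨ p ^ v ≤ i := by
      by_cases h0 : p ∣ i
      · right
        have hb : ¬ p ∣ (i - 1) := fun h => by
          have := Nat.dvd_sub h0 h
          rw [show i - (i - 1) = 1 by omega] at this
          exact absurd (Nat.le_of_dvd one_pos this) (by omega)
        have hc : ¬ p ∣ (i - 2) := fun h => by
          have := Nat.dvd_sub h0 h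
          rw [show i - (i - 2) = 2 by omega] at this
          exact absurd (Nat.le_of_dvd two_pos this) (by omega)
        exact Nat.le_of_dvd (show 0 < i by omega) (extract_dvd hp hpv hb hc)
      · by_cases h1 : p ∣ (i - 1)
        · right
          have hc : ¬ p ∣ (i - 2) := fun h => by
            have := Nat.dvd_sub h1 h
            rw [show i - 1 - (i - 2) = 1 by omega] at this
            exact absurd (Nat.le_of_dvd one_pos this) (by omega)
          have : p ^ v ∣ i - 1 := by
            have hre : p ^ v ∣ (i - 1) * (i * (i - 2)) := by
              rw [show (i - 1) * (i * (i - 2)) = i * ((i - 1) * (i - 2)) by ring]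
              exact hpv
            exact extract_dvd hp hre h0 hc
          have hle1 : p ^ v ≤ i - 1 := Nat.le_of_dvd (show 0 < _ by omega) this
          exact hle1.trans (by omega)
        · by_cases h2 : p ∣ (i - 2)
          · right
            have : p ^ v ∣ i - 2 := by
              have hre : p ^ v ∣ (i - 2) * (i * (i - 1)) := by
                rw [show (i - 2) * (i * (i - 1)) = i * ((i - 1) * (i - 2)) by ring]
                exact hpv
              exact extract_dvd hp hre h0 h1
            have hle2 : p ^ v ≤ i - 2 := Nat.le_of_dvd (show 0 < _ by omega) this
            exact hle2.trans (by omega)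
          · left
            by_contra hv0
            have hpd : p ∣ i * ((i - 1) * (i - 2)) :=
              (dvd_pow_self p hv0).trans hpv
            rcases (Nat.Prime.dvd_mul hp).mp hpd with h | h
            · exact h0 h
            · rcases (Nat.Prime.dvd_mul hp).mp h with h | h
              · exact h1 h
              · exact h2 h
    rcases hple with h | h
    · omega
    · rcases Nat.eq_zero_or_pos v with h0 | h0
      · omega
      · have hp5 : 5 ≤ p := by
          rcases Nat.lt_or_ge p 5 with hlt | hge
          · interval_cases p
            exact absurd hp (by decide)
          · exact hge
        have h5 : 5 ^ v ≤ p ^ v := Nat.pow_le_pow_left hp5 v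
        have := five_pow_ge v h0
        omega
  -- conclude
  have hcne : r.choose i ≠ 0 := (Nat.choose_pos hir).ne'
  have hne : r.choose i * i.choose 3 ≠ 0 := Nat.mul_ne_zero hcne hc3pos.ne'
  have hle : t ≤ (r.choose i * i.choose 3).factorization p :=
    (Nat.Prime.pow_dvd_iff_le_factorization hp hne).mp hdvd
  rw [Nat.factorization_mul hcne hc3pos.ne'] at hle
  simp only [Finsupp.coe_add, Pi.add_apply] at hle
  apply (Nat.Prime.pow_dvd_iff_le_factorization hp hcne).mpr
  omega

theorem stmt_17 (p n t r : ℕ) (hp : p.Prime) (hp3 : 3 < p)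
    (hr : r = 2 + n * (p - 1) * p^t) :
    ∀ i : ℕ, 3 ≤ i → i ≤ t + 3 →
      (p : ℤ)^(t + 3 - i) ∣ ∑ j ∈ (Finset.Ioc 1 (r - 1)).filter
        (fun j => j % (p - 1) = 1 % (p - 1)), (j.choose i : ℤ) * (r.choose j : ℤ) := by
  intro i hi3 hit
  apply Finset.dvd_sum
  intro j hj
  simp only [Finset.mem_filter, Finset.mem_Ioc] at hj
  obtain ⟨⟨hj1, hjr⟩, _⟩ := hj
  by_cases hij : i ≤ j
  · have hjr' : j ≤ r := by omega
    have hmul : r.choose j * j.choose i = r.choose i * (r - i).choose (j - i) :=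
      Nat.choose_mul (n := r) hij
    have hkey : (p : ℤ) ^ (t + 3 - i) ∣ (r.choose i : ℤ) := by
      have h := key_dvd p n t i hp hp3 hi3 hit
      rw [← hr] at h
      exact_mod_cast Int.natCast_dvd_natCast.mpr h
    have : (j.choose i : ℤ) * (r.choose j : ℤ) =
        (r.choose i : ℤ) * ((r - i).choose (j - i) : ℤ) := by
      have := congrArg (Nat.cast : ℕ → ℤ) hmul
      push_cast at this
      linarith
    rw [this]
    exact hkey.mul_right _
  · rw [Nat.choose_eq_zero_of_lt (by omega)]
    simp
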